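/- Let G: [0,∞) → ℝ be continuously differentiable with G(0) = 0, lim_{s→∞} G(s) = 0, G'(0) ≤ 0, and suppose s ↦ (1+s^{1/N})^α G'(s) is increasing on (0,∞) for some fixed N ≥ 1 and α > N. Then G(s) ≤ 0 for all s ≥ 0, and if G(s₀) = 0 for some s₀ > 0 then G ≡ 0 on [0,∞). -/

import Mathlib

open Set Filter

/-- Dichotomy used in the Faber–Krahn theorem for Bergman spaces: if `G` is `C¹` on `[0,∞)`
with `G(0) = 0`, `G(s) → 0` as `s → ∞`, `G'(0) ≤ 0`, and `s ↦ (1+s^{1/N})^α G'(s)` is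
increasing on `(0,∞)` (for some `N ≥ 1`, `α > N`), then `G ≤ 0` everywhere, and if `G`
vanishes at some positive point then `G` vanishes identically. -/
theorem nonpos_and_rigidity_of_weighted_deriv_monotone
    (N : ℕ) (hN : 1 ≤ N) (α : ℝ) (hα : (N : ℝ) < α)
    (G : ℝ → ℝ) (hG : ContDiffOn ℝ 1 G (Ici 0))
    (hG0 : G 0 = 0) (hlim : Tendsto G atTop (nhds 0))
    (hD0 : derivWithin G (Ici 0) 0 ≤ 0)
    (hmono : MonotoneOn
      (fun s => (1 + s ^ ((1:ℝ)/N)) ^ α * derivWithin G (Ici 0) s) (Ioi 0)) :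
    (∀ s ≥ (0:ℝ), G s ≤ 0) ∧ (∀ s₀ > (0:ℝ), G s₀ = 0 → ∀ s ≥ (0:ℝ), G s = 0) := by
  have hcont : ContinuousOn G (Ici 0) := hG.continuousOn
  have hdiff : ∀ x : ℝ, 0 < x → DifferentiableAt ℝ G x := by
    intro x hx
    exact (hG.contDiffAt (Ici_mem_nhds hx)).differentiableAt one_ne_zero
  have hde : ∀ x : ℝ, 0 < x → derivWithin G (Ici 0) x = deriv G x := by
    intro x hx
    exact derivWithin_of_mem_nhds (Ici_mem_nhds hx)
  have hpos : ∀ x : ℝ, 0 < x → 0 < (1 + x ^ ((1:ℝ)/N)) ^ α := by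
    intro x hx
    have h1 : (0:ℝ) < 1 + x ^ ((1:ℝ)/N) := by positivity
    positivity
  -- at a positive global max, the derivative vanishes
  have hzero : ∀ m : ℝ, 0 < m → (∀ s ≥ (0:ℝ), G s ≤ G m) → deriv G m = 0 := by
    intro m hm hmax
    have hloc : IsLocalMax G m :=
      Filter.eventually_of_mem (Ioi_mem_nhds hm) fun x hx => hmax x (le_of_lt hx)
    exact hloc.deriv_eq_zero
  -- if deriv G m = 0 at m > 0, then deriv G ≤ 0 on (0, m)
  have hneg : ∀ m : ℝ, 0 < m → deriv G m = 0 →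
      ∀ x : ℝ, 0 < x → x ≤ m → deriv G x ≤ 0 := by
    intro m hm hdm x hx hxm
    have := hmono (show x ∈ Ioi 0 from hx) (show m ∈ Ioi 0 from hm) hxm
    simp only [hde x hx, hde m hm, hdm, mul_zero] at this
    by_contra h
    push_neg at h
    have := mul_pos (hpos x hx) h
    linarith
  -- if deriv G m = 0 at m > 0, then deriv G ≥ 0 on (m, ∞)
  have hposd : ∀ m : ℝ, 0 < m → deriv G m = 0 →
      ∀ x : ℝ, m ≤ x → 0 ≤ deriv G x := by
    intro m hm hdm x hmx
    have hx : 0 < x := lt_of_lt_of_le hm hmx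
    have := hmono (show m ∈ Ioi 0 from hm) (show x ∈ Ioi 0 from hx) hmx
    simp only [hde x hx, hde m hm, hdm, mul_zero] at this
    by_contra h
    push_neg at h
    have := mul_pos (hpos x hx) (neg_pos.mpr h)
    nlinarith
  -- antitone on [0, m] whenever deriv vanishes at a positive global max m
  have hanti : ∀ m : ℝ, 0 < m → deriv G m = 0 → AntitoneOn G (Icc 0 m) := by
    intro m hm hdm
    apply antitoneOn_of_deriv_nonpos (convex_Icc 0 m) (hcont.mono Icc_subset_Ici_self)
    · intro x hx
      rw [interior_Icc] at hx
      exact (hdiff x hx.1).differentiableWithinAt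
    · intro x hx
      rw [interior_Icc] at hx
      exact hneg m hm hdm x hx.1 hx.2.le
  -- part 1 : G ≤ 0 everywhere on [0, ∞)
  have part1 : ∀ s ≥ (0:ℝ), G s ≤ 0 := by
    by_contra h
    push_neg at h
    obtain ⟨s, hs0, hspos⟩ := h
    obtain ⟨R, hR⟩ := eventually_atTop.mp (hlim.eventually (eventually_lt_nhds hspos))
    set T := max R s with hT
    have hsT : s ∈ Icc (0:ℝ) T := ⟨hs0, le_max_right _ _⟩
    obtain ⟨m, hmI, hmax⟩ := isCompact_Icc.exists_isMaxOn ⟨s, hsT⟩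
      (hcont.mono (Icc_subset_Ici_self : Icc (0:ℝ) T ⊆ Ici 0))
    have hglob : ∀ x ≥ (0:ℝ), G x ≤ G m := by
      intro x hx
      by_cases hxT : x ≤ T
      · exact hmax ⟨hx, hxT⟩
      · push_neg at hxT
        have : G x < G s := hR x (le_trans (le_max_left _ _) hxT.le)
        exact le_trans this.le (hmax hsT)
    have hGm : 0 < G m := lt_of_lt_of_le hspos (hmax hsT)
    have hm0 : 0 < m := by
      rcases lt_or_eq_of_le hmI.1 with h | h
      · exact h
      · exfalso; rw [← h, hG0] at hGm; exact lt_irrefl 0 hGm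
    have hdm := hzero m hm0 hglob
    have hle : G m ≤ G 0 := hanti m hm0 hdm ⟨le_refl 0, hm0.le⟩ ⟨hm0.le, le_refl m⟩ hm0.le
    rw [hG0] at hle
    linarith
  refine ⟨part1, ?_⟩
  -- part 2 : rigidity
  intro s₀ hs₀ hGs₀ s hs
  have hglob : ∀ x ≥ (0:ℝ), G x ≤ G s₀ := by
    intro x hx
    rw [hGs₀]; exact part1 x hx
  have hdm := hzero s₀ hs₀ hglob
  by_cases hss : s ≤ s₀
  · -- G antitone on [0,s₀], G s ≥ G s₀ = 0 and G s ≤ 0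
    have hge : G s₀ ≤ G s := hanti s₀ hs₀ hdm ⟨hs, hss⟩ ⟨hs₀.le, le_refl s₀⟩ hss
    have hle := part1 s hs
    rw [hGs₀] at hge
    linarith
  · push_neg at hss
    -- G monotone on [s₀, ∞)
    have hmonoG : MonotoneOn G (Ici s₀) := by
      apply monotoneOn_of_deriv_nonneg (convex_Ici s₀)
        (hcont.mono (Ici_subset_Ici.mpr hs₀.le))
      · intro x hx
        rw [interior_Ici] at hx
        exact (hdiff x (lt_trans hs₀ hx)).differentiableWithinAt
      · intro x hx
        rw [interior_Ici] at hx
        exact hposd s₀ hs₀ hdm x hx.le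
    have hge : G s₀ ≤ G s := hmonoG (self_mem_Ici) (mem_Ici.mpr hss.le) hss.le
    have hle := part1 s hs
    rw [hGs₀] at hge
    linarith
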